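/- The axis â₀ of Ĥ is primitive: the 1-eigenspace of the multiplication operator ad_{â₀} : x ↦ â₀·x equals the one-dimensional subspace 𝔽·â₀, i.e. for x ∈ Ĥ, â₀·x = x if and only if x is a scalar multiple of â₀. -/

import Mathlib

namespace HatAlgebra

/-- Basis of the algebra `Ĥ`: vectors `â i` for `i : ℤ`, `ŝ_{0̄,j}` for `j` a positive
integer, and `ŝ_{1̄,3k}`, `ŝ_{2̄,3k}` for `k` a positive integer. -/
inductive HatB : Type
  | a : ℤ → HatB
  | s0 : ℕ+ → HatB
  | s1 : ℕ+ → HatB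
  | s2 : ℕ+ → HatB
  deriving DecidableEq

variable (F : Type*) [Field F]

/-- The underlying vector space of `Ĥ`: the free `F`-vector space on `HatB`. -/
abbrev HatH : Type _ := HatB →₀ F

/-- The basis vector `â i`. -/
noncomputable def aHat (i : ℤ) : HatH F := Finsupp.single (HatB.a i) 1

/-- The element `ŝ_{r̄,j}` of `Ĥ`, with the conventions `ŝ_{r̄,0} = 0` and
`ŝ_{1̄,j} = ŝ_{0̄,j} = ŝ_{2̄,j}` whenever `3 ∤ j`. -/
noncomputable def sHat (r : ZMod 3) (j : ℕ) : HatH F :=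
  if h : j = 0 then 0
  else if h3 : 3 ∣ j then
    if r = 0 then Finsupp.single (HatB.s0 ⟨j, Nat.pos_of_ne_zero h⟩) 1
    else if r = 1 then
      Finsupp.single (HatB.s1 ⟨j / 3,
        Nat.div_pos (Nat.le_of_dvd (Nat.pos_of_ne_zero h) h3) (by norm_num)⟩) 1
    else
      Finsupp.single (HatB.s2 ⟨j / 3,
        Nat.div_pos (Nat.le_of_dvd (Nat.pos_of_ne_zero h) h3) (by norm_num)⟩) 1
  else Finsupp.single (HatB.s0 ⟨j, Nat.pos_of_ne_zero h⟩) 1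

/-- The operation `∗`: `(−1) ∗ 1̄ = −1`, `(−1) ∗ 2̄ = 1`, `0 ∗ t̄ = 0`. -/
def hatStar (x : ℤ) (t : ZMod 3) : ℤ :=
  if x = 0 then 0 else if t = 1 then -1 else if t = 2 then 1 else 0

/-- The coefficient `(δ_{ī,r̄} − 1) ∗ (ī − r̄)` appearing in rule (Ĥ2). -/
def hatC (i r : ZMod 3) : ℤ := hatStar ((if i = r then 1 else 0) - 1) (i - r)

/-- Rule (Ĥ2): the product `â_i · ŝ_{r̄,j}`. -/
noncomputable def aMulS (i : ℤ) (r : ZMod 3) (j : ℕ) : HatH F :=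
  (-2 : F) • aHat F i + (aHat F (i - (j : ℤ)) + aHat F (i + (j : ℤ))) - sHat F r j
    - (hatC (i : ZMod 3) r : F) • (sHat F (r - 1) j - sHat F (r + 1) j)

/-- `ŝ_{0̄,n} + ŝ_{1̄,n} + ŝ_{2̄,n}`. -/
noncomputable def sSum (n : ℕ) : HatH F := sHat F 0 n + sHat F 1 n + sHat F 2 n

/-- For `r ≠ t` in `ℤ/3ℤ`, the signed sum `ŝ_{r̄,n} + ŝ_{t̄,n} − ŝ_{m̄,n}` where `m̄`
is the third residue class (appearing in rules (Ĥ5), (Ĥ6), (Ĥ7)). -/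
noncomputable def sT (r t : ZMod 3) (n : ℕ) : HatH F :=
  sHat F r n + sHat F t n - sHat F (-(r + t)) n

/-- Rules (Ĥ3)–(Ĥ7): the product `ŝ_{r̄,i} · ŝ_{t̄,j}`. -/
noncomputable def sMulS (r : ZMod 3) (i : ℕ) (t : ZMod 3) (j : ℕ) : HatH F :=
  if 3 ∣ i ∧ 3 ∣ j then
    if r = t then
      (2 : F) • (sHat F r i + sHat F r j) - (sHat F r (Nat.dist i j) + sHat F r (i + j))
    else
      (2 : F) • (sT F r t i + sT F r t j) - (sT F r t (Nat.dist i j) + sT F r t (i + j))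
  else
    (2 : F) • (sHat F r i + sHat F t j) - (2 : F) • (sSum F (Nat.dist i j) + sSum F (i + j))

/-- The product of `Ĥ` on basis vectors, given by rules (Ĥ1)–(Ĥ7) (extended
symmetrically, since the product is commutative). -/
noncomputable def mulB : HatB → HatB → HatH F
  | .a i, .a j => (-2 : F) • (aHat F i + aHat F j) + sHat F (i : ZMod 3) (i - j).natAbs
  | .a i, .s0 j => aMulS F i 0 (j : ℕ)
  | .s0 j, .a i => aMulS F i 0 (j : ℕ)
  | .a i, .s1 k => aMulS F i 1 (3 * (k : ℕ))
  | .s1 k, .a i => aMulS F i 1 (3 * (k : ℕ))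
  | .a i, .s2 k => aMulS F i 2 (3 * (k : ℕ))
  | .s2 k, .a i => aMulS F i 2 (3 * (k : ℕ))
  | .s0 i, .s0 j => sMulS F 0 (i : ℕ) 0 (j : ℕ)
  | .s0 i, .s1 k => sMulS F 0 (i : ℕ) 1 (3 * (k : ℕ))
  | .s1 k, .s0 i => sMulS F 0 (i : ℕ) 1 (3 * (k : ℕ))
  | .s0 i, .s2 k => sMulS F 0 (i : ℕ) 2 (3 * (k : ℕ))
  | .s2 k, .s0 i => sMulS F 0 (i : ℕ) 2 (3 * (k : ℕ))
  | .s1 h, .s1 k => sMulS F 1 (3 * (h : ℕ)) 1 (3 * (k : ℕ))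
  | .s1 h, .s2 k => sMulS F 1 (3 * (h : ℕ)) 2 (3 * (k : ℕ))
  | .s2 k, .s1 h => sMulS F 1 (3 * (h : ℕ)) 2 (3 * (k : ℕ))
  | .s2 h, .s2 k => sMulS F 2 (3 * (h : ℕ)) 2 (3 * (k : ℕ))

/-- The commutative bilinear product of `Ĥ`, as a bilinear map. -/
noncomputable def hatMul : HatH F →ₗ[F] HatH F →ₗ[F] HatH F :=
  Finsupp.lift (HatH F →ₗ[F] HatH F) F HatB fun x => Finsupp.lift (HatH F) F HatB (mulB F x)

/-- The product of two elements of `Ĥ`. -/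
noncomputable def hmul (x y : HatH F) : HatH F := hatMul F x y


variable {F}

@[simp] lemma sHat_zero (r : ZMod 3) : sHat F r 0 = 0 := by simp [sHat]

lemma sHat0_eq (j : ℕ) (h : j ≠ 0) :
    sHat F 0 j = Finsupp.single (HatB.s0 ⟨j, Nat.pos_of_ne_zero h⟩) 1 := by
  simp [sHat, h]

lemma sHat1_eq (k : ℕ+) :
    sHat F 1 (3 * (k : ℕ)) = Finsupp.single (HatB.s1 k) 1 := by
  have h0 : (3 * (k : ℕ)) ≠ 0 := by positivity
  rw [sHat, dif_neg h0, dif_pos (Dvd.intro (k : ℕ) rfl),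
    if_neg (by decide : (1 : ZMod 3) ≠ 0), if_pos rfl]
  congr 1
  congr 1
  apply PNat.eq
  show 3 * (k : ℕ) / 3 = (k : ℕ)
  omega

lemma sHat2_eq (k : ℕ+) :
    sHat F 2 (3 * (k : ℕ)) = Finsupp.single (HatB.s2 k) 1 := by
  have h0 : (3 * (k : ℕ)) ≠ 0 := by positivity
  rw [sHat, dif_neg h0, dif_pos (Dvd.intro (k : ℕ) rfl),
    if_neg (by decide : (2 : ZMod 3) ≠ 0), if_neg (by decide : (2 : ZMod 3) ≠ 1)]
  congr 1
  congr 1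
  apply PNat.eq
  show 3 * (k : ℕ) / 3 = (k : ℕ)
  omega

@[simp] lemma sHat_apply_a (r : ZMod 3) (j : ℕ) (i : ℤ) :
    sHat F r j (HatB.a i) = 0 := by
  unfold sHat; split_ifs <;> simp [Finsupp.single_apply]

@[simp] lemma sHat0_apply_s0 (j : ℕ) (n : ℕ+) :
    sHat F 0 j (HatB.s0 n) = if j = (n : ℕ) then 1 else 0 := by
  rcases eq_or_ne j 0 with rfl | h
  · rw [sHat_zero, if_neg (fun h => n.ne_zero h.symm)]; rfl
  · rw [sHat0_eq j h]
    rw [Finsupp.single_apply]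
    by_cases hj : j = (n : ℕ)
    · subst hj; exact (if_pos rfl).trans (if_pos rfl).symm
    · rw [if_neg hj, if_neg]; intro he; injection he with he; exact hj (congrArg PNat.val he)

@[simp] lemma sHat0_apply_s1 (j : ℕ) (m : ℕ+) : sHat F 0 j (HatB.s1 m) = 0 := by
  rcases eq_or_ne j 0 with rfl | h
  · simp
  · rw [sHat0_eq j h]; simp [Finsupp.single_apply]

@[simp] lemma sHat0_apply_s2 (j : ℕ) (m : ℕ+) : sHat F 0 j (HatB.s2 m) = 0 := by
  rcases eq_or_ne j 0 with rfl | h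
  · simp
  · rw [sHat0_eq j h]; simp [Finsupp.single_apply]

@[simp] lemma sHat1_apply_s0 (k : ℕ+) (n : ℕ+) :
    sHat F 1 (3 * (k : ℕ)) (HatB.s0 n) = 0 := by
  rw [sHat1_eq]; simp [Finsupp.single_apply]

@[simp] lemma sHat1_apply_s1 (k m : ℕ+) :
    sHat F 1 (3 * (k : ℕ)) (HatB.s1 m) = if k = m then 1 else 0 := by
  rw [sHat1_eq]; simp [Finsupp.single_apply]

@[simp] lemma sHat1_apply_s2 (k m : ℕ+) :
    sHat F 1 (3 * (k : ℕ)) (HatB.s2 m) = 0 := by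
  rw [sHat1_eq]; simp [Finsupp.single_apply]

@[simp] lemma sHat2_apply_s0 (k : ℕ+) (n : ℕ+) :
    sHat F 2 (3 * (k : ℕ)) (HatB.s0 n) = 0 := by
  rw [sHat2_eq]; simp [Finsupp.single_apply]

@[simp] lemma sHat2_apply_s1 (k m : ℕ+) :
    sHat F 2 (3 * (k : ℕ)) (HatB.s1 m) = 0 := by
  rw [sHat2_eq]; simp [Finsupp.single_apply]

@[simp] lemma sHat2_apply_s2 (k m : ℕ+) :
    sHat F 2 (3 * (k : ℕ)) (HatB.s2 m) = if k = m then 1 else 0 := by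
  rw [sHat2_eq]; simp [Finsupp.single_apply]

@[simp] lemma hatC_00 : hatC 0 0 = 0 := by decide
@[simp] lemma hatC_01 : hatC 0 1 = 1 := by decide
@[simp] lemma hatC_02 : hatC 0 2 = -1 := by decide

@[simp] lemma aHat_apply_a (i n : ℤ) :
    aHat F i (HatB.a n) = if i = n then 1 else 0 := by
  simp [aHat, Finsupp.single_apply]

@[simp] lemma aHat_apply_s0 (i : ℤ) (n : ℕ+) : aHat F i (HatB.s0 n) = 0 := by
  simp [aHat, Finsupp.single_apply]

@[simp] lemma aHat_apply_s1 (i : ℤ) (n : ℕ+) : aHat F i (HatB.s1 n) = 0 := by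
  simp [aHat, Finsupp.single_apply]

@[simp] lemma aHat_apply_s2 (i : ℤ) (n : ℕ+) : aHat F i (HatB.s2 n) = 0 := by
  simp [aHat, Finsupp.single_apply]

variable (F) in
/-- Junk coefficient coming from `ŝ`-terms at `a`/`s0` targets. -/
def tail (N : ℕ) : HatB → F
  | .s1 m => if 3 * (m : ℕ) = N then 1 else 0
  | .s2 m => if 3 * (m : ℕ) = N then 1 else 0
  | _ => 0

lemma coeff_s1 (k : ℕ+) (b : HatB) :
    mulB F (HatB.a 0) b (HatB.s1 k) =
      (if b = HatB.s1 k then (-1 : F) else 0) + (if b = HatB.s2 k then (1 : F) else 0) := by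
  cases b with
  | a i =>
      simp only [mulB, Finsupp.add_apply, Finsupp.smul_apply, aHat_apply_s1, sHat0_apply_s1,
        smul_zero, add_zero, zero_add]
      rcases eq_or_ne i 0 with rfl | h
      · simp [Int.cast_zero, sHat0_apply_s1]
      · simp [sHat0_apply_s1]
  | s0 j =>
      simp [mulB, aMulS, Finsupp.sub_apply, Finsupp.add_apply, Finsupp.smul_apply]
  | s1 m =>
      simp only [mulB, aMulS, Int.cast_zero, hatC_01, Int.cast_one, one_smul,
        show (1 - 1 : ZMod 3) = 0 by decide, show (1 + 1 : ZMod 3) = 2 by decide,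
        Finsupp.sub_apply, Finsupp.add_apply, Finsupp.smul_apply,
        aHat_apply_s1, sHat0_apply_s1, sHat1_apply_s1, sHat2_apply_s1]
      simp [Finsupp.single_apply, eq_comm] <;> (split_ifs <;> simp)
  | s2 m =>
      simp only [mulB, aMulS, Int.cast_zero, hatC_02, Int.cast_neg, Int.cast_one, neg_smul, one_smul,
        show (2 - 1 : ZMod 3) = 1 by decide, show (2 + 1 : ZMod 3) = 0 by decide,
        Finsupp.sub_apply, Finsupp.add_apply, Finsupp.smul_apply,
        aHat_apply_s1, sHat0_apply_s1, sHat1_apply_s1, sHat2_apply_s1]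
      simp [Finsupp.single_apply, eq_comm] <;> (split_ifs <;> simp)

lemma coeff_s2 (k : ℕ+) (b : HatB) :
    mulB F (HatB.a 0) b (HatB.s2 k) =
      (if b = HatB.s1 k then (1 : F) else 0) + (if b = HatB.s2 k then (-1 : F) else 0) := by
  cases b with
  | a i =>
      simp only [mulB, Finsupp.add_apply, Finsupp.smul_apply, aHat_apply_s2, sHat0_apply_s2,
        smul_zero, add_zero, zero_add]
      rcases eq_or_ne i 0 with rfl | h
      · simp
      · simp
  | s0 j =>
      simp [mulB, aMulS, Finsupp.sub_apply, Finsupp.add_apply, Finsupp.smul_apply]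
  | s1 m =>
      simp only [mulB, aMulS, Int.cast_zero, hatC_01, Int.cast_one, one_smul,
        show (1 - 1 : ZMod 3) = 0 by decide, show (1 + 1 : ZMod 3) = 2 by decide,
        Finsupp.sub_apply, Finsupp.add_apply, Finsupp.smul_apply,
        aHat_apply_s2, sHat0_apply_s2, sHat1_apply_s2, sHat2_apply_s2]
      simp [Finsupp.single_apply, eq_comm] <;> (split_ifs <;> simp)
  | s2 m =>
      simp only [mulB, aMulS, Int.cast_zero, hatC_02, Int.cast_neg, Int.cast_one, neg_smul, one_smul,
        show (2 - 1 : ZMod 3) = 1 by decide, show (2 + 1 : ZMod 3) = 0 by decide,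
        Finsupp.sub_apply, Finsupp.add_apply, Finsupp.smul_apply,
        aHat_apply_s2, sHat0_apply_s2, sHat1_apply_s2, sHat2_apply_s2]
      simp [Finsupp.single_apply, eq_comm] <;> (split_ifs <;> simp)


lemma hmul_a0 (x : HatH F) :
    hmul F (aHat F 0) x = x.sum fun b c => c • mulB F (HatB.a 0) b := by
  show hatMul F (aHat F 0) x = _
  rw [hatMul, Finsupp.lift_apply, aHat, Finsupp.sum_single_index, one_smul,
    Finsupp.lift_apply]
  simp

lemma hmul_a0_apply (x : HatH F) (b₀ : HatB) :
    hmul F (aHat F 0) x b₀ = x.sum fun b c => c * mulB F (HatB.a 0) b b₀ := by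
  rw [hmul_a0, Finsupp.sum_apply]
  simp [Finsupp.smul_apply, smul_eq_mul]

lemma coeff_s0 (n : ℕ+) (b : HatB) :
    mulB F (HatB.a 0) b (HatB.s0 n) =
      ((if b = HatB.a ((n : ℕ) : ℤ) then (1 : F) else 0)
        + (if b = HatB.a (-((n : ℕ) : ℤ)) then (1 : F) else 0)
        + (if b = HatB.s0 n then (-1 : F) else 0)) - tail F (n : ℕ) b := by
  have hn : 0 < (n : ℕ) := n.2
  cases b with
  | a i =>
      simp only [mulB, Finsupp.add_apply, Finsupp.smul_apply, Finsupp.neg_apply, smul_eq_mul, neg_smul, aHat_apply_s0, smul_zero,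
        add_zero, zero_add, Int.cast_zero, sHat0_apply_s0, tail, HatB.a.injEq, sub_zero]
      split_ifs <;>
        (try (exfalso; first | assumption | omega | (simp_all; done) |
          (simp only [← PNat.coe_inj] at *; omega))) <;> (try norm_num) <;> (try assumption) <;> (try omega)
  | s0 j =>
      have hj : 0 < (j : ℕ) := j.2
      simp only [mulB, aMulS, Int.cast_zero, hatC_00, one_smul, zero_smul, sub_zero,
        Finsupp.sub_apply, Finsupp.add_apply, Finsupp.smul_apply, Finsupp.neg_apply, smul_eq_mul, neg_smul, aHat_apply_s0,
        sHat0_apply_s0, tail, HatB.s0.injEq]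
      split_ifs <;>
        (try (exfalso; first | assumption | omega | (simp_all; done) |
          (simp only [← PNat.coe_inj] at *; omega))) <;> (try norm_num) <;> (try assumption) <;> (try omega)
  | s1 m =>
      simp only [mulB, aMulS, Int.cast_zero, hatC_01, Int.cast_one, one_smul,
        show (1 - 1 : ZMod 3) = 0 by decide, show (1 + 1 : ZMod 3) = 2 by decide,
        Finsupp.sub_apply, Finsupp.add_apply, Finsupp.smul_apply, Finsupp.neg_apply, smul_eq_mul, neg_smul, aHat_apply_s0,
        sHat0_apply_s0, sHat1_apply_s0, sHat2_apply_s0, tail]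
      split_ifs <;>
        (try (exfalso; first | assumption | omega | (simp_all; done) |
          (simp only [← PNat.coe_inj] at *; omega))) <;> (try norm_num) <;> (try assumption) <;> (try omega)
  | s2 m =>
      simp only [mulB, aMulS, Int.cast_zero, hatC_02, Int.cast_neg, Int.cast_one,
        neg_smul, one_smul,
        show (2 - 1 : ZMod 3) = 1 by decide, show (2 + 1 : ZMod 3) = 0 by decide,
        Finsupp.sub_apply, Finsupp.add_apply, Finsupp.smul_apply, Finsupp.neg_apply, smul_eq_mul, neg_smul, aHat_apply_s0,
        sHat0_apply_s0, sHat1_apply_s0, sHat2_apply_s0, tail]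
      split_ifs <;>
        (try (exfalso; first | assumption | omega | (simp_all; done) |
          (simp only [← PNat.coe_inj] at *; omega))) <;> (try norm_num) <;> (try assumption) <;> (try omega)

lemma coeff_a (n : ℕ+) (m : ℤ) (hm : m = ((n : ℕ) : ℤ) ∨ m = -((n : ℕ) : ℤ)) (b : HatB) :
    mulB F (HatB.a 0) b (HatB.a m) =
      ((if b = HatB.a m then (-2 : F) else 0) + (if b = HatB.s0 n then (1 : F) else 0))
        + tail F (n : ℕ) b := by
  have hn : 0 < (n : ℕ) := n.2
  have hm0 : m ≠ 0 := by rcases hm with rfl | rfl <;> simp <;> omega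
  cases b with
  | a i =>
      simp only [mulB, Finsupp.add_apply, Finsupp.smul_apply, Finsupp.neg_apply, smul_eq_mul, neg_smul, aHat_apply_a, Int.cast_zero,
        sHat_apply_a, add_zero, tail, HatB.a.injEq]
      rw [if_neg (show ¬((0:ℤ) = m) from fun h => hm0 h.symm)]
      split_ifs <;>
        (try (exfalso; first | assumption | omega | (simp_all; done) |
          (simp only [← PNat.coe_inj] at *; omega))) <;> (try norm_num) <;> (try assumption) <;> (try omega)
  | s0 j =>
      have hj : 0 < (j : ℕ) := j.2
      simp only [mulB, aMulS, Int.cast_zero, hatC_00, zero_smul, sub_zero,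
        Finsupp.sub_apply, Finsupp.add_apply, Finsupp.smul_apply, Finsupp.neg_apply, smul_eq_mul, neg_smul, aHat_apply_a,
        sHat_apply_a, tail, HatB.s0.injEq]
      rw [if_neg (show ¬((0:ℤ) = m) from fun h => hm0 h.symm)]
      rcases hm with rfl | rfl <;>
        (split_ifs <;>
          (try (exfalso; first | assumption | omega | (simp_all; done) |
            (simp only [← PNat.coe_inj] at *; omega))) <;> (try norm_num) <;> (try assumption) <;> (try omega))
  | s1 m' =>
      have hj : 0 < (m' : ℕ) := m'.2
      simp only [mulB, aMulS, Int.cast_zero, hatC_01, Int.cast_one, one_smul,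
        show (1 - 1 : ZMod 3) = 0 by decide, show (1 + 1 : ZMod 3) = 2 by decide,
        Finsupp.sub_apply, Finsupp.add_apply, Finsupp.smul_apply, Finsupp.neg_apply, smul_eq_mul, neg_smul, aHat_apply_a,
        sHat_apply_a, tail]
      rw [if_neg (show ¬((0:ℤ) = m) from fun h => hm0 h.symm)]
      rcases hm with rfl | rfl <;>
        (split_ifs <;>
          (try (exfalso; first | assumption | omega | (simp_all; done) |
            (simp only [← PNat.coe_inj] at *; omega))) <;> (try norm_num) <;> (try assumption) <;> (try omega))
  | s2 m' =>
      have hj : 0 < (m' : ℕ) := m'.2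
      simp only [mulB, aMulS, Int.cast_zero, hatC_02, Int.cast_neg, Int.cast_one,
        neg_smul, one_smul,
        show (2 - 1 : ZMod 3) = 1 by decide, show (2 + 1 : ZMod 3) = 0 by decide,
        Finsupp.sub_apply, Finsupp.add_apply, Finsupp.smul_apply, Finsupp.neg_apply, smul_eq_mul, neg_smul, aHat_apply_a,
        sHat_apply_a, tail]
      rw [if_neg (show ¬((0:ℤ) = m) from fun h => hm0 h.symm)]
      rcases hm with rfl | rfl <;>
        (split_ifs <;>
          (try (exfalso; first | assumption | omega | (simp_all; done) |
            (simp only [← PNat.coe_inj] at *; omega))) <;> (try norm_num) <;> (try assumption) <;> (try omega))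

lemma sum_if (x : HatH F) (b' : HatB) (k : F) :
    (x.sum fun b c => c * (if b = b' then k else 0)) = x b' * k := by
  have h : (fun (b : HatB) (c : F) => c * (if b = b' then k else 0))
      = fun b c => if b = b' then c * k else 0 := by
    funext b c; split_ifs <;> simp
  rw [h, Finsupp.sum_ite_eq']
  split_ifs with hb
  · rfl
  · rw [Finsupp.notMem_support_iff.mp hb, zero_mul]

lemma sum_split (x : HatH F) (f g : HatB → F) :
    (x.sum fun b c => c * (f b + g b))
      = (x.sum fun b c => c * f b) + x.sum fun b c => c * g b := by
  simp_rw [mul_add]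
  exact Finset.sum_add_distrib

lemma sum_split_sub (x : HatH F) (f g : HatB → F) :
    (x.sum fun b c => c * (f b - g b))
      = (x.sum fun b c => c * f b) - x.sum fun b c => c * g b := by
  simp_rw [mul_sub]
  simp only [Finsupp.sum, Finset.sum_sub_distrib]

lemma sum_tail (x : HatH F) (N : ℕ) (h1 : ∀ m, x (HatB.s1 m) = 0)
    (h2 : ∀ m, x (HatB.s2 m) = 0) :
    (x.sum fun b c => c * tail F N b) = 0 := by
  rw [Finsupp.sum]
  apply Finset.sum_eq_zero
  intro b _
  cases b with
  | a i => simp [tail]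
  | s0 j => simp [tail]
  | s1 m => simp [h1 m]
  | s2 m => simp [h2 m]

/-- The axis `â₀` of `Ĥ` is primitive: the `1`-eigenspace of `ad_{â₀}` is `𝔽·â₀`. -/
theorem a0_primitive [CharP F 5] (x : HatH F) :
    hmul F (aHat F 0) x = x ↔ ∃ c : F, x = c • aHat F 0 := by
  have h5 : (5 : F) = 0 := by exact_mod_cast CharP.cast_eq_zero F 5
  have base : hmul F (aHat F 0) (aHat F 0) = aHat F 0 := by
    rw [hmul_a0, aHat, Finsupp.sum_single_index (by simp), one_smul]
    show (-2 : F) • (aHat F 0 + aHat F 0) + sHat F ((0 : ℤ) : ZMod 3) ((0 - 0 : ℤ)).natAbs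
      = Finsupp.single (HatB.a 0) 1
    ext b
    simp only [Int.sub_self, Int.natAbs_zero, sHat_zero, add_zero, Finsupp.add_apply,
      Finsupp.smul_apply, smul_eq_mul, aHat, Finsupp.single_apply]
    split_ifs <;> first | linear_combination -h5 | ring
  constructor
  · intro h
    have happ : ∀ b₀ : HatB, (x.sum fun b c => c * mulB F (HatB.a 0) b b₀) = x b₀ := by
      intro b₀; rw [← hmul_a0_apply]; exact DFunLike.congr_fun h b₀
    have hs12 : ∀ k : ℕ+, x (HatB.s1 k) = 0 ∧ x (HatB.s2 k) = 0 := by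
      intro k
      have h1 := happ (HatB.s1 k)
      have h2 := happ (HatB.s2 k)
      simp only [coeff_s1 k, coeff_s2 k] at h1 h2
      rw [sum_split, sum_if, sum_if] at h1 h2
      have hv : x (HatB.s2 k) = 0 := by
        linear_combination 3 * h1 + 6 * h2 + (2 * x (HatB.s2 k)) * h5
      have hu : x (HatB.s1 k) = 0 := by linear_combination h2 + 2 * hv
      exact ⟨hu, hv⟩
    have hs1 : ∀ m, x (HatB.s1 m) = 0 := fun m => (hs12 m).1
    have hs2 : ∀ m, x (HatB.s2 m) = 0 := fun m => (hs12 m).2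
    have hall : ∀ n : ℕ+, x (HatB.a ((n : ℕ) : ℤ)) = 0 ∧ x (HatB.a (-((n : ℕ) : ℤ))) = 0
        ∧ x (HatB.s0 n) = 0 := by
      intro n
      have hA := happ (HatB.a ((n : ℕ) : ℤ))
      have hA' := happ (HatB.a (-((n : ℕ) : ℤ)))
      have hS := happ (HatB.s0 n)
      simp only [coeff_a n ((n : ℕ) : ℤ) (Or.inl rfl)] at hA
      simp only [coeff_a n (-((n : ℕ) : ℤ)) (Or.inr rfl)] at hA'
      simp only [coeff_s0 n] at hS
      rw [sum_split, sum_split, sum_if, sum_if, sum_tail x _ hs1 hs2] at hA hA'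
      rw [sum_split_sub, sum_split, sum_split, sum_if, sum_if, sum_if,
        sum_tail x _ hs1 hs2] at hS
      have eA : x (HatB.a ((n : ℕ) : ℤ)) = 0 := by
        linear_combination 2 * hA' + hS + (x (HatB.a (-((n : ℕ) : ℤ)))) * h5
      have eA' : x (HatB.a (-((n : ℕ) : ℤ))) = 0 := by
        linear_combination 2 * hA + hS + (x (HatB.a ((n : ℕ) : ℤ))) * h5
      have eS : x (HatB.s0 n) = 0 := by linear_combination hA + 3 * eA
      exact ⟨eA, eA', eS⟩
    refine ⟨x (HatB.a 0), ?_⟩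
    ext b
    cases b with
    | a i =>
        rcases eq_or_ne i 0 with rfl | hi
        · simp [aHat, Finsupp.single_apply]
        · have h0 : x (HatB.a i) = 0 := by
            rcases Int.natAbs_eq i with hh | hh
            · have := (hall ⟨i.natAbs, Int.natAbs_pos.mpr hi⟩).1
              simp only [PNat.mk_coe] at this
              rw [hh]; exact this
            · have := (hall ⟨i.natAbs, Int.natAbs_pos.mpr hi⟩).2.1
              simp only [PNat.mk_coe] at this
              rw [hh]; exact this
          simp [h0, aHat, Finsupp.single_apply, hi, Ne.symm hi]
    | s0 n => simp [(hall n).2.2, aHat, Finsupp.single_apply]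
    | s1 m => simp [hs1 m, aHat, Finsupp.single_apply]
    | s2 m => simp [hs2 m, aHat, Finsupp.single_apply]
  · rintro ⟨c, rfl⟩
    show hatMul F (aHat F 0) (c • aHat F 0) = c • aHat F 0
    rw [map_smul]
    exact congrArg (c • ·) base

end HatAlgebra
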